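/- Let M and E be real symmetric n×n matrices and suppose M has nonnegative entries. Then the largest singular value of the Hadamard product M ∘ E satisfies σ₁(M ∘ E) ≤ (max_{i,j} |E(i,j)|)·σ₁(M). -/

import Mathlib

open Matrix

noncomputable section

/-- Largest singular value of a square real matrix, i.e. its ℓ² operator
(spectral) norm. -/
def sigma1 {n : ℕ} (A : Matrix (Fin n) (Fin n) ℝ) : ℝ :=
  ‖Matrix.toEuclideanCLM (𝕜 := ℝ) A‖

/-- Lemma A.1, Hadamard product bound: if `M` is real symmetric
with nonnegative entries and `E` is real symmetric, then
`σ₁(M ∘ E) ≤ (max_{i,j} |E(i,j)|)·σ₁(M)`. -/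
theorem statement_16 {n : ℕ} (M E : Matrix (Fin n) (Fin n) ℝ)
    (hM : M.IsSymm) (hE : E.IsSymm) (hMnonneg : ∀ i j, 0 ≤ M i j) :
    sigma1 (Matrix.hadamard M E) ≤ (⨆ i, ⨆ j, |E i j|) * sigma1 M := by
  rcases Nat.eq_zero_or_pos n with hn | hn
  · subst hn
    haveI : Subsingleton (EuclideanSpace ℝ (Fin 0)) :=
      ⟨fun a b => (WithLp.ext_iff _).2 (funext fun i => Fin.elim0 i)⟩
    have key : ∀ A : Matrix (Fin 0) (Fin 0) ℝ, sigma1 A = 0 := by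
      intro A
      refine le_antisymm ?_ (norm_nonneg _)
      refine ContinuousLinearMap.opNorm_le_bound _ le_rfl fun x => ?_
      rw [Subsingleton.elim (Matrix.toEuclideanCLM (𝕜 := ℝ) A x) 0, norm_zero, zero_mul]
    simp [key]
  · have hne : Nonempty (Fin n) := ⟨⟨0, hn⟩⟩
    set c : ℝ := ⨆ i, ⨆ j, |E i j| with hc
    have hcle : ∀ i j, |E i j| ≤ c := by
      intro i j
      calc |E i j| ≤ ⨆ j, |E i j| :=
            le_ciSup (f := fun j => |E i j|) (Set.Finite.bddAbove (Set.finite_range _)) j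
        _ ≤ c :=
            le_ciSup (f := fun i => ⨆ j, |E i j|) (Set.Finite.bddAbove (Set.finite_range _)) i
    have hc0 : 0 ≤ c := le_trans (abs_nonneg _) (hcle ⟨0, hn⟩ ⟨0, hn⟩)
    have hs0 : 0 ≤ sigma1 M := norm_nonneg _
    have habs : ∀ u : Fin n → ℝ,
        ‖(WithLp.equiv 2 (Fin n → ℝ)).symm (fun i => |u i|)‖ =
        ‖(WithLp.equiv 2 (Fin n → ℝ)).symm u‖ := by
      intro u
      rw [EuclideanSpace.norm_eq, EuclideanSpace.norm_eq]
      congr 1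
      apply Finset.sum_congr rfl
      intro i _
      simp [abs_abs]
    have lem1 : ∀ u v : Fin n → ℝ,
        |((Matrix.hadamard M E).mulVec u) ⬝ᵥ v| ≤
          c * ((M.mulVec (fun j => |u j|)) ⬝ᵥ (fun i => |v i|)) := by
      intro u v
      have h1 : |((Matrix.hadamard M E).mulVec u) ⬝ᵥ v| ≤
          ∑ i, ∑ j, M i j * |E i j| * |u j| * |v i| := by
        refine le_trans (Finset.abs_sum_le_sum_abs _ _) ?_
        refine Finset.sum_le_sum fun i _ => ?_
        rw [Matrix.mulVec, dotProduct, abs_mul, ← Finset.sum_mul]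
        refine mul_le_mul_of_nonneg_right ?_ (abs_nonneg _)
        refine le_trans (Finset.abs_sum_le_sum_abs _ _) ?_
        refine le_of_eq (Finset.sum_congr rfl fun j _ => ?_)
        simp [Matrix.hadamard, abs_mul, abs_of_nonneg (hMnonneg i j), mul_assoc]
      refine le_trans h1 ?_
      have h2 : ∑ i, ∑ j, M i j * |E i j| * |u j| * |v i| ≤
          ∑ i, ∑ j, c * (M i j * |u j| * |v i|) := by
        refine Finset.sum_le_sum fun i _ => Finset.sum_le_sum fun j _ => ?_
        have : M i j * |E i j| ≤ M i j * c :=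
          mul_le_mul_of_nonneg_left (hcle i j) (hMnonneg i j)
        calc M i j * |E i j| * |u j| * |v i| ≤ M i j * c * |u j| * |v i| :=
              mul_le_mul_of_nonneg_right
                (mul_le_mul_of_nonneg_right this (abs_nonneg (u j))) (abs_nonneg (v i))
          _ = c * (M i j * |u j| * |v i|) := by ring
      refine le_trans h2 (le_of_eq ?_)
      simp only [dotProduct, Matrix.mulVec, Finset.sum_mul, Finset.mul_sum]
    have lem2 : ∀ w z : Fin n → ℝ,
        (M.mulVec w) ⬝ᵥ z ≤ sigma1 M * ‖(WithLp.equiv 2 (Fin n → ℝ)).symm w‖ *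
          ‖(WithLp.equiv 2 (Fin n → ℝ)).symm z‖ := by
      intro w z
      set w' := (WithLp.equiv 2 (Fin n → ℝ)).symm w with hw'
      set z' := (WithLp.equiv 2 (Fin n → ℝ)).symm z with hz'
      have hinner : (M.mulVec w) ⬝ᵥ z =
          inner ℝ (Matrix.toEuclideanCLM (𝕜 := ℝ) M w') z' := by
        rw [hw', hz', WithLp.equiv_symm_apply, Matrix.toEuclideanCLM_toLp,
          EuclideanSpace.inner_toLp_toLp, star_trivial, dotProduct_comm]
      rw [hinner]
      calc inner ℝ (Matrix.toEuclideanCLM (𝕜 := ℝ) M w') z' ≤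
            ‖Matrix.toEuclideanCLM (𝕜 := ℝ) M w'‖ * ‖z'‖ := real_inner_le_norm _ _
        _ ≤ sigma1 M * ‖w'‖ * ‖z'‖ :=
            mul_le_mul_of_nonneg_right
              ((Matrix.toEuclideanCLM (𝕜 := ℝ) M).le_opNorm w') (norm_nonneg _)
    -- final assembly
    refine ContinuousLinearMap.opNorm_le_bound _ (by positivity) fun x => ?_
    set f := Matrix.toEuclideanCLM (𝕜 := ℝ) (Matrix.hadamard M E) with hf
    set y := f x with hy
    have hx' : x = (WithLp.equiv 2 (Fin n → ℝ)).symm (WithLp.equiv 2 (Fin n → ℝ) x) := by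
      simp
    have hy' : y = (WithLp.equiv 2 (Fin n → ℝ)).symm (WithLp.equiv 2 (Fin n → ℝ) y) := by
      simp
    have hsq : ‖y‖ * ‖y‖ ≤ (c * sigma1 M * ‖x‖) * ‖y‖ := by
      have h0 : ‖y‖ * ‖y‖ = inner ℝ y y := (real_inner_self_eq_norm_mul_norm y).symm
      have hyx : WithLp.equiv 2 (Fin n → ℝ) y =
          (Matrix.hadamard M E).mulVec (WithLp.equiv 2 (Fin n → ℝ) x) := by
        rw [hy, hf]
        rfl
      have h1 : (inner ℝ y y : ℝ) =
          ((Matrix.hadamard M E).mulVec (WithLp.equiv 2 (Fin n → ℝ) x)) ⬝ᵥ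
            (WithLp.equiv 2 (Fin n → ℝ) y) := by
        rw [hy']
        rw [WithLp.equiv_symm_apply, EuclideanSpace.inner_toLp_toLp, star_trivial, hyx]
        simp
      have h2 := lem1 (WithLp.equiv 2 (Fin n → ℝ) x) (WithLp.equiv 2 (Fin n → ℝ) y)
      have h3 := lem2 (fun j => |(WithLp.equiv 2 (Fin n → ℝ) x) j|)
        (fun i => |(WithLp.equiv 2 (Fin n → ℝ) y) i|)
      rw [habs, habs] at h3
      have h4 : ‖(WithLp.equiv 2 (Fin n → ℝ)).symm (WithLp.equiv 2 (Fin n → ℝ) x)‖ = ‖x‖ := by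
        rw [← hx']
      have h5 : ‖(WithLp.equiv 2 (Fin n → ℝ)).symm (WithLp.equiv 2 (Fin n → ℝ) y)‖ = ‖y‖ := by
        rw [← hy']
      rw [h4, h5] at h3
      calc ‖y‖ * ‖y‖ = inner ℝ y y := h0
        _ ≤ |((Matrix.hadamard M E).mulVec (WithLp.equiv 2 (Fin n → ℝ) x)) ⬝ᵥ
              (WithLp.equiv 2 (Fin n → ℝ) y)| := by rw [h1]; exact le_abs_self _
        _ ≤ c * ((M.mulVec (fun j => |(WithLp.equiv 2 (Fin n → ℝ) x) j|)) ⬝ᵥ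
              (fun i => |(WithLp.equiv 2 (Fin n → ℝ) y) i|)) := h2
        _ ≤ c * (sigma1 M * ‖x‖ * ‖y‖) := mul_le_mul_of_nonneg_left h3 hc0
        _ = (c * sigma1 M * ‖x‖) * ‖y‖ := by ring
    rcases eq_or_lt_of_le (norm_nonneg y) with h | h
    · rw [← h]
      positivity
    · have := le_of_mul_le_mul_right hsq h
      calc ‖f x‖ = ‖y‖ := rfl
        _ ≤ c * sigma1 M * ‖x‖ := this
        _ = c * sigma1 M * ‖x‖ := rfl

end
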